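/- Let k < n/2 and let V be a nonzero subspace of Pol_k(C_n) (spanned by square-free monomials of degree k on the hypercube C_n = {-1,1}ⁿ) that is invariant under sign switches and coordinate permutations. Then applying the averaging operator ∏_{i=k+1}^n (id + ε_i) to any p ∈ V with nonzero coefficient on x₁⋯x_k yields 2^{n−k}·x₁x₂⋯x_k, where ε_i is the sign switch of the i-th coordinate; consequently V = Pol_k(C_n). -/

import Mathlib

/-- The hypercube `C_n = {-1,1}ⁿ`, as a type. -/
def Cube (n : ℕ) : Type := {x : Fin n → ℝ // ∀ i, x i = 1 ∨ x i = -1}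

/-- Switching the sign of the `j`-th coordinate of a hypercube point. -/
def flipAt (n : ℕ) (j : Fin n) (x : Cube n) : Cube n :=
  ⟨fun i => if i = j then -x.1 i else x.1 i, by
    intro i
    by_cases hij : i = j
    · subst hij; rcases x.2 i with h | h <;> simp [h]
    · rcases x.2 i with h | h <;> simp [hij, h]⟩

/-- Permuting the coordinates of a hypercube point. -/
def permAt (n : ℕ) (σ : Equiv.Perm (Fin n)) (x : Cube n) : Cube n :=
  ⟨fun i => x.1 (σ i), fun i => x.2 (σ i)⟩

/-- The operator `id + ε_j` acting on functions on the hypercube, where `ε_j` is the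
sign switch of the `j`-th coordinate. -/
def opE (n : ℕ) (j : Fin n) (f : Cube n → ℝ) : Cube n → ℝ :=
  fun x => f x + f (flipAt n j x)

/-- The composite operator `∏_{j ∈ s} (id + ε_j)` (the operators commute). -/
def opProd (n : ℕ) (s : List (Fin n)) (f : Cube n → ℝ) : Cube n → ℝ :=
  s.foldr (opE n) f

lemma mono_flip {n : ℕ} (j : Fin n) (I : Finset (Fin n)) (x : Cube n) :
    (∏ i ∈ I, (flipAt n j x).1 i) = (if j ∈ I then (-1:ℝ) else 1) * ∏ i ∈ I, x.1 i := by
  by_cases hj : j ∈ I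
  · rw [if_pos hj, ← Finset.mul_prod_erase I _ hj, ← Finset.mul_prod_erase I (fun i => x.1 i) hj]
    have h2 : ∀ i ∈ I.erase j, (flipAt n j x).1 i = x.1 i := by
      intro i hi
      simp [flipAt, Finset.ne_of_mem_erase hi]
    rw [Finset.prod_congr rfl h2]
    show (if j = j then -x.1 j else x.1 j) * _ = _
    rw [if_pos rfl]; ring
  · rw [if_neg hj, one_mul]
    refine Finset.prod_congr rfl fun i hi => ?_
    have : i ≠ j := fun h => hj (h ▸ hi)
    simp [flipAt, this]

lemma opE_mono {n : ℕ} (j : Fin n) (I : Finset (Fin n)) :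
    opE n j (fun x => ∏ i ∈ I, x.1 i)
      = fun x => (if j ∈ I then (0:ℝ) else 2) * ∏ i ∈ I, x.1 i := by
  funext x
  show (∏ i ∈ I, x.1 i) + (∏ i ∈ I, (flipAt n j x).1 i) = _
  rw [mono_flip]
  by_cases hj : j ∈ I <;> simp [hj] <;> ring

lemma opE_const_mul {n : ℕ} (j : Fin n) (a : ℝ) (f : Cube n → ℝ) :
    opE n j (fun x => a * f x) = fun x => a * opE n j f x := by
  funext x; show a * f x + a * f _ = a * (f x + f _); ring

lemma opProd_const_mul {n : ℕ} (s : List (Fin n)) (a : ℝ) (f : Cube n → ℝ) :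
    opProd n s (fun x => a * f x) = fun x => a * opProd n s f x := by
  induction s with
  | nil => rfl
  | cons b t ih =>
    show opE n b (opProd n t fun x => a * f x) = _
    rw [ih, opE_const_mul]
    rfl

lemma opProd_mono {n : ℕ} (s : List (Fin n)) (I : Finset (Fin n)) :
    opProd n s (fun x => ∏ i ∈ I, x.1 i)
      = fun x => (if ∀ j ∈ s, j ∉ I then (2:ℝ) ^ s.length else 0) * ∏ i ∈ I, x.1 i := by
  induction s with
  | nil => funext x; simp [opProd]
  | cons b t ih =>
    show opE n b (opProd n t fun x => ∏ i ∈ I, x.1 i) = _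
    rw [ih]
    have hI : (fun x : Cube n => (if ∀ j ∈ t, j ∉ I then (2:ℝ) ^ t.length else 0) * ∏ i ∈ I, x.1 i)
        = fun x => (if ∀ j ∈ t, j ∉ I then (2:ℝ) ^ t.length else 0) * (fun x : Cube n => ∏ i ∈ I, x.1 i) x := rfl
    rw [hI, opE_const_mul, opE_mono]
    funext x
    by_cases hb : b ∈ I <;> by_cases ht : ∀ j ∈ t, j ∉ I <;>
      simp [hb, ht, List.mem_cons] <;> ring_nf <;> simp [hb]

lemma opE_sum {n : ℕ} (j : Fin n) {α : Type*} (T : Finset α) (g : α → Cube n → ℝ) :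
    opE n j (fun x => ∑ I ∈ T, g I x) = fun x => ∑ I ∈ T, opE n j (g I) x := by
  funext x
  show (∑ I ∈ T, g I x) + (∑ I ∈ T, g I _) = _
  rw [← Finset.sum_add_distrib]
  rfl

lemma opProd_sum {n : ℕ} (s : List (Fin n)) {α : Type*} (T : Finset α) (g : α → Cube n → ℝ) :
    opProd n s (fun x => ∑ I ∈ T, g I x) = fun x => ∑ I ∈ T, opProd n s (g I) x := by
  induction s with
  | nil => rfl
  | cons b t ih =>
    show opE n b (opProd n t fun x => ∑ I ∈ T, g I x) = _
    rw [ih, opE_sum]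
    rfl

/-- Let `k < n/2` and let `V` be a nonzero subspace of `Pol_k(C_n)` invariant under
sign switches and coordinate permutations. Then applying `∏_{i=k+1}^{n}(id + ε_i)` to
any `p = ∑_{|I|=k} c_I x^I` with `c_{{1,…,k}} ≠ 0` yields
`c_{{1,…,k}} · 2^{n-k} · x₁⋯x_k`; consequently `V = Pol_k(C_n)`. -/
theorem cube_polK_irreducible (n k : ℕ) (hk : 2 * k < n)
    (V : Submodule ℝ (Cube n → ℝ)) (hV0 : V ≠ ⊥)
    (hVle : V ≤ Submodule.span ℝ
      {f | ∃ I : Finset (Fin n), I.card = k ∧ f = fun x : Cube n => ∏ i ∈ I, x.1 i})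
    (hflip : ∀ (j : Fin n), ∀ f ∈ V, (fun x => f (flipAt n j x)) ∈ V)
    (hperm : ∀ (σ : Equiv.Perm (Fin n)), ∀ f ∈ V, (fun x => f (permAt n σ x)) ∈ V) :
    (∀ (c : Finset (Fin n) → ℝ) (p : Cube n → ℝ),
      (p = fun x : Cube n =>
        ∑ I ∈ Finset.univ.filter (fun I : Finset (Fin n) => I.card = k),
          c I * ∏ i ∈ I, x.1 i) →
      c (Finset.univ.filter fun i : Fin n => (i : ℕ) < k) ≠ 0 →
      opProd n ((List.finRange n).filter fun i => k ≤ (i : ℕ)) p =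
        fun x : Cube n =>
          c (Finset.univ.filter fun i : Fin n => (i : ℕ) < k) * 2 ^ (n - k) *
            ∏ i ∈ Finset.univ.filter (fun i : Fin n => (i : ℕ) < k), x.1 i) ∧
    V = Submodule.span ℝ
      {f | ∃ I : Finset (Fin n), I.card = k ∧ f = fun x : Cube n => ∏ i ∈ I, x.1 i} := by
  classical
  have hkn : k < n := by omega
  set I0 : Finset (Fin n) := Finset.univ.filter fun i : Fin n => (i : ℕ) < k with hI0def
  set T : Finset (Finset (Fin n)) :=
    Finset.univ.filter (fun I : Finset (Fin n) => I.card = k) with hTdef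
  set S : List (Fin n) := (List.finRange n).filter fun i => k ≤ (i : ℕ) with hSdef
  have memS : ∀ j : Fin n, j ∈ S ↔ k ≤ (j : ℕ) := by
    intro j; simp [hSdef, List.mem_filter]
  have memI0 : ∀ j : Fin n, j ∈ I0 ↔ (j : ℕ) < k := by
    intro j; simp [hI0def]
  have cardI0 : I0.card = k := by
    have : I0 = Finset.Iio (⟨k, hkn⟩ : Fin n) := by
      ext i; simp [hI0def, Fin.lt_def]
    rw [this, Fin.card_Iio]
  have lenS : S.length = n - k := by
    have hnd : S.Nodup := (List.nodup_finRange n).filter _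
    have h1 : S.length = S.toFinset.card := (List.toFinset_card_of_nodup hnd).symm
    have h2 : S.toFinset = I0ᶜ := by
      ext i
      rw [List.mem_toFinset, memS, Finset.mem_compl, memI0, not_lt]
    rw [h1, h2, Finset.card_compl, cardI0, Fintype.card_fin]
  -- the key computation
  have key : ∀ c : Finset (Fin n) → ℝ,
      opProd n S (fun x => ∑ I ∈ T, c I * ∏ i ∈ I, x.1 i)
        = fun x : Cube n => c I0 * 2 ^ (n - k) * ∏ i ∈ I0, x.1 i := by
    intro c
    have hterm : ∀ I : Finset (Fin n),
        opProd n S (fun x => c I * ∏ i ∈ I, x.1 i)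
          = fun x => c I * ((if ∀ j ∈ S, j ∉ I then (2:ℝ) ^ S.length else 0) * ∏ i ∈ I, x.1 i) := by
      intro I
      have h1 : opProd n S (fun x => c I * ∏ i ∈ I, x.1 i)
          = fun x => c I * opProd n S (fun x => ∏ i ∈ I, x.1 i) x :=
        opProd_const_mul S (c I) (fun x => ∏ i ∈ I, x.1 i)
      rw [h1, opProd_mono]
    rw [opProd_sum]
    funext x
    rw [Finset.sum_eq_single I0]
    · rw [hterm]
      have hcond : ∀ j ∈ S, j ∉ I0 := by
        intro j hj hj0
        have := (memS j).mp hj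
        have := (memI0 j).mp hj0
        omega
      rw [if_pos hcond, lenS]
      ring
    · intro I hIT hne
      rw [hterm]
      have hcond : ¬ (∀ j ∈ S, j ∉ I) := by
        intro hcon
        apply hne
        have hsub : I ⊆ I0 := by
          intro i hi
          rw [memI0]
          by_contra hge
          exact hcon i ((memS i).mpr (not_lt.mp hge)) hi
        have hIcard : I.card = k := by
          have := Finset.mem_filter.mp hIT
          exact this.2
        exact Finset.eq_of_subset_of_card_le hsub (by rw [hIcard, cardI0])
      rw [if_neg hcond]
      show c I * ((0:ℝ) * ∏ i ∈ I, x.1 i) = 0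
      ring
    · intro h
      exact absurd (show I0 ∈ T by simp [hTdef, cardI0]) h
  -- operators preserve V
  have hop : ∀ (s : List (Fin n)) (f : Cube n → ℝ), f ∈ V → opProd n s f ∈ V := by
    intro s
    induction s with
    | nil => exact fun f hf => hf
    | cons b t ih =>
      intro f hf
      show opE n b (opProd n t f) ∈ V
      have h1 := ih f hf
      have h2 := hflip b _ h1
      exact V.add_mem h1 h2
  refine ⟨fun c p hp _ => by rw [hp]; exact key c, ?_⟩
  -- part 2
  obtain ⟨p, hpV, hp0⟩ := (Submodule.ne_bot_iff V).mp hV0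
  have hrep : ∃ c : Finset (Fin n) → ℝ,
      p = fun x => ∑ I ∈ T, c I * ∏ i ∈ I, x.1 i := by
    refine Submodule.span_induction
      (p := fun q _ => ∃ c : Finset (Fin n) → ℝ,
        q = fun x => ∑ I ∈ T, c I * ∏ i ∈ I, x.1 i) ?_ ?_ ?_ ?_ (hVle hpV)
    · rintro f ⟨I, hI, rfl⟩
      refine ⟨fun J => if J = I then 1 else 0, ?_⟩
      funext x
      rw [Finset.sum_eq_single I]
      · simp
      · intro J _ hne; simp [hne]
      · intro h; exact absurd (show I ∈ T by simp [hTdef, hI]) h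
    · exact ⟨0, by funext x; simp⟩
    · rintro f g _ _ ⟨c1, rfl⟩ ⟨c2, rfl⟩
      refine ⟨fun I => c1 I + c2 I, ?_⟩
      funext x
      show (∑ I ∈ T, c1 I * ∏ i ∈ I, x.1 i) + (∑ I ∈ T, c2 I * ∏ i ∈ I, x.1 i) = _
      rw [← Finset.sum_add_distrib]
      exact Finset.sum_congr rfl fun I _ => by ring
    · rintro a f _ ⟨c1, rfl⟩
      refine ⟨fun I => a * c1 I, ?_⟩
      funext x
      show a * (∑ I ∈ T, c1 I * ∏ i ∈ I, x.1 i) = _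
      rw [Finset.mul_sum]
      exact Finset.sum_congr rfl fun I _ => by ring
  obtain ⟨c, rfl⟩ := hrep
  have hJ : ∃ J ∈ T, c J ≠ 0 := by
    by_contra h
    push_neg at h
    apply hp0
    funext x
    show (∑ I ∈ T, c I * ∏ i ∈ I, x.1 i) = 0
    exact Finset.sum_eq_zero fun I hI => by rw [h I hI, zero_mul]
  obtain ⟨J, hJT, hcJ⟩ := hJ
  have hJcard : J.card = k := (Finset.mem_filter.mp hJT).2
  have hcards : J.card = I0.card := by rw [hJcard, cardI0]
  let e : (J : Finset (Fin n)) ≃ (I0 : Finset (Fin n)) := Finset.equivOfCardEq hcards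
  let σ : Equiv.Perm (Fin n) := e.extendSubtype
  have himg : J.image σ = I0 := by
    apply Finset.eq_of_subset_of_card_le
    · intro i hi
      obtain ⟨a, ha, rfl⟩ := Finset.mem_image.mp hi
      exact e.extendSubtype_mem a ha
    · rw [Finset.card_image_of_injective _ σ.injective, hJcard, cardI0]
  have hqV : (fun x => (fun x => ∑ I ∈ T, c I * ∏ i ∈ I, x.1 i) (permAt n σ x)) ∈ V :=
    hperm σ _ hpV
  have hq : (fun x : Cube n => (fun x => ∑ I ∈ T, c I * ∏ i ∈ I, x.1 i) (permAt n σ x))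
      = fun x => ∑ I ∈ T, c (I.image σ.symm) * ∏ i ∈ I, x.1 i := by
    funext x
    show ∑ I ∈ T, c I * ∏ i ∈ I, (permAt n σ x).1 i = _
    refine Finset.sum_equiv σ.finsetCongr ?_ ?_
    · intro I
      simp only [hTdef, Finset.mem_filter, Finset.mem_univ, true_and,
        Equiv.finsetCongr_apply, Finset.card_map]
    · intro I hIT
      have h1 : ∏ i ∈ I, (permAt n σ x).1 i = ∏ i ∈ I.image σ, x.1 i := by
        rw [Finset.prod_image (fun a _ b _ h => σ.injective h)]
        rfl
      have h2 : σ.finsetCongr I = I.image σ := by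
        rw [Equiv.finsetCongr_apply, Finset.map_eq_image]
        rfl
      have h3 : (I.image σ).image σ.symm = I := by
        rw [Finset.image_image]
        simp
      rw [h1, h2, h3]
  rw [hq] at hqV
  have h1 := hop S _ hqV
  rw [key (fun I => c (I.image σ.symm))] at h1
  have hc'I0 : c (I0.image σ.symm) = c J := by
    rw [← himg, Finset.image_image]
    simp
  rw [hc'I0] at h1
  have hc0 : c J * (2:ℝ) ^ (n - k) ≠ 0 := mul_ne_zero hcJ (by positivity)
  have hmono0 : (fun x : Cube n => ∏ i ∈ I0, x.1 i) ∈ V := by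
    have h2 := V.smul_mem (c J * (2:ℝ) ^ (n - k))⁻¹ h1
    have h3 : (fun x : Cube n => ∏ i ∈ I0, x.1 i)
        = (c J * (2:ℝ) ^ (n - k))⁻¹ • (fun x : Cube n => c J * 2 ^ (n - k) * ∏ i ∈ I0, x.1 i) := by
      funext x
      show _ = (c J * (2:ℝ) ^ (n - k))⁻¹ * (c J * 2 ^ (n - k) * ∏ i ∈ I0, x.1 i)
      rw [← mul_assoc, inv_mul_cancel₀ hc0, one_mul]
    rw [h3]
    exact h2
  have hall : ∀ I : Finset (Fin n), I.card = k → (fun x : Cube n => ∏ i ∈ I, x.1 i) ∈ V := by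
    intro I hI
    have hcards2 : I0.card = I.card := by rw [cardI0, hI]
    let e2 : (I0 : Finset (Fin n)) ≃ (I : Finset (Fin n)) := Finset.equivOfCardEq hcards2
    let τ : Equiv.Perm (Fin n) := e2.extendSubtype
    have himg2 : I0.image τ = I := by
      apply Finset.eq_of_subset_of_card_le
      · intro i hi
        obtain ⟨a, ha, rfl⟩ := Finset.mem_image.mp hi
        exact e2.extendSubtype_mem a ha
      · rw [Finset.card_image_of_injective _ τ.injective, cardI0, hI]
    have hmem := hperm τ _ hmono0
    have heq : (fun x : Cube n => (fun x : Cube n => ∏ i ∈ I0, x.1 i) (permAt n τ x))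
        = fun x : Cube n => ∏ i ∈ I, x.1 i := by
      funext x
      show ∏ i ∈ I0, x.1 (τ i) = _
      rw [← himg2, Finset.prod_image (fun a _ b _ h => τ.injective h)]
    rw [heq] at hmem
    exact hmem
  apply le_antisymm hVle
  rw [Submodule.span_le]
  rintro f ⟨I, hI, rfl⟩
  exact hall I hI
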